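/- Let Λ be a set with |Λ| ≥ 5 (so an auxiliary element exists), F a field, and K, Q : Λ² → F determinantally equivalent functions of class D. Assume every 3-cycle of distinct vertices in Λ satisfies K[p] = Q[p]. Let x, y ∈ Λ be distinct with K(x,y) = 0 = K(y,x). Then for all z, w ∈ Λ \ {x,y} with z ≠ w: (Q(x,z)Q(z,y)) / (K(x,z)K(z,y)) = (Q(x,w)Q(w,y)) / (K(x,w)K(w,y)), where all denominators are nonzero. -/

import Mathlib

def DetEquiv {Λ F : Type*} [Field F] (K Q : Λ → Λ → F) : Prop :=
  ∀ (n : ℕ) (x : Fin n → Λ),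
    Matrix.det (Matrix.of fun i j => K (x i) (x j)) =
    Matrix.det (Matrix.of fun i j => Q (x i) (x j))

def ClassD {Λ F : Type*} [Field F] (h : Λ → Λ → F) : Prop :=
  ∀ x y z w : Λ, x ≠ y → x ≠ z → x ≠ w → y ≠ z → y ≠ w → z ≠ w →
    h x y * h w z - h x z * h w y ≠ 0

/-- If `h` is class D and `h x y = 0` then `h x z ≠ 0` and `h w y ≠ 0`. -/
lemma aux_nz {Λ F : Type*} [Field F] {h : Λ → Λ → F} (hD : ClassD h)
    {x y z w : Λ} (hxy : x ≠ y) (hxz : x ≠ z) (hxw : x ≠ w) (hyz : y ≠ z)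
    (hyw : y ≠ w) (hzw : z ≠ w) (h0 : h x y = 0) : h x z ≠ 0 ∧ h w y ≠ 0 := by
  have hd := hD x y z w hxy hxz hxw hyz hyw hzw
  rw [h0] at hd
  have : h x z * h w y ≠ 0 := by
    intro hc; apply hd; rw [zero_mul, hc]; ring
  exact mul_ne_zero_iff.mp this

theorem stmt13 {Λ F : Type*} [Field F] (hcard : 5 ≤ Cardinal.mk Λ)
    (K Q : Λ → Λ → F) (hKQ : DetEquiv K Q) (hK : ClassD K) (hQ : ClassD Q)
    (hcase1 : ∀ a b c : Λ, a ≠ b → a ≠ c → b ≠ c →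
      K a b * K b c * K c a = Q a b * Q b c * Q c a)
    (x y : Λ) (hxy : x ≠ y) (hxy0 : K x y = 0) (hyx0 : K y x = 0) :
    ∀ z w : Λ, z ≠ x → z ≠ y → w ≠ x → w ≠ y → z ≠ w →
      (K x z ≠ 0 ∧ K z y ≠ 0 ∧ K x w ≠ 0 ∧ K w y ≠ 0) ∧
      Q x z * Q z y / (K x z * K z y) = Q x w * Q w y / (K x w * K w y) := by
  classical
  -- two-point determinant relation
  have two : ∀ a b : Λ, K a b * K b a = Q a b * Q b a := by
    intro a b
    have d1 := hKQ 1 ![a]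
    have d2 := hKQ 1 ![b]
    have h := hKQ 2 ![a, b]
    simp [Matrix.det_fin_one, Matrix.det_fin_two] at d1 d2 h
    linear_combination d1 * K b b + Q a a * d2 - h
  -- a fresh point outside any finite set of size ≤ 4
  have exists5 : ∀ s : Finset Λ, s.card ≤ 4 → ∃ u, u ∉ s := by
    intro s hs
    by_contra hc
    push_neg at hc
    have huniv : (Set.univ : Set Λ) ⊆ (↑s : Set Λ) := fun a _ => hc a
    have h1 : Cardinal.mk Λ ≤ (s.card : Cardinal) := by
      calc Cardinal.mk Λ = Cardinal.mk (Set.univ : Set Λ) := Cardinal.mk_univ.symm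
        _ ≤ Cardinal.mk (↑s : Set Λ) := Cardinal.mk_le_mk_of_subset huniv
        _ = (s.card : Cardinal) := Cardinal.mk_coe_finset
    have h2 : (s.card : Cardinal) ≤ (4 : Cardinal) := by
      exact_mod_cast Nat.cast_le.mpr hs
    have : (5 : Cardinal) ≤ 4 := le_trans hcard (le_trans h1 h2)
    norm_num at this
  -- nonvanishing of K on edges from/to {x,y}
  have Knz : ∀ z : Λ, z ≠ x → z ≠ y →
      K x z ≠ 0 ∧ K z y ≠ 0 ∧ K y z ≠ 0 ∧ K z x ≠ 0 := by
    intro z hzx hzy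
    obtain ⟨w, hw⟩ := exists5 {x, y, z} (by
      apply le_trans (Finset.card_insert_le _ _)
      simp [Finset.card_insert_le]
      have := Finset.card_insert_le y ({z} : Finset Λ)
      rw [Finset.card_singleton] at this
      omega)
    simp [Finset.mem_insert] at hw
    obtain ⟨hwx, hwy, hwz⟩ := hw
    have h1 := aux_nz hK hxy hzx.symm (Ne.symm hwx) hzy.symm (Ne.symm hwy)
      (fun hc => hwz hc.symm) hxy0
    have h2 := aux_nz hK hxy.symm hzy.symm (Ne.symm hwy) hzx.symm (Ne.symm hwx)
      (fun hc => hwz hc.symm) hyx0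
    -- h1 : K x z ≠ 0 ∧ K w y ≠ 0 ; h2 : K y z ≠ 0 ∧ K w x ≠ 0
    have h3 := aux_nz hK hxy hzx.symm (Ne.symm hwx) hzy.symm (Ne.symm hwy)
      (fun hc => hwz hc.symm) hxy0
    -- need K z y and K z x : use quadruple with z in last slot
    have h4 := aux_nz hK hxy (Ne.symm hwx) hzx.symm (Ne.symm hwy) hzy.symm
      hwz hxy0
    -- h4 : K x w ≠ 0 ∧ K z y ≠ 0
    have h5 := aux_nz hK hxy.symm (Ne.symm hwy) hzy.symm (Ne.symm hwx) hzx.symm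
      hwz hyx0
    -- h5 : K y w ≠ 0 ∧ K z x ≠ 0
    exact ⟨h1.1, h4.2, h2.1, h5.2⟩
  -- Q vanishes at (x,y) and (y,x)
  have q2 : Q x y * Q y x = 0 := by rw [← two x y, hxy0, zero_mul]
  obtain ⟨z0, hz0⟩ := exists5 {x, y} (by
    exact le_trans (Finset.card_insert_le _ _) (by simp))
  simp [Finset.mem_insert] at hz0
  obtain ⟨hz0x, hz0y⟩ := hz0
  obtain ⟨w0, hw0⟩ := exists5 {x, y, z0} (by
    exact le_trans (Finset.card_insert_le _ _)
      (le_trans (by exact Nat.succ_le_succ (Finset.card_insert_le _ _)) (by simp)))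
  simp [Finset.mem_insert] at hw0
  obtain ⟨hw0x, hw0y, hw0z⟩ := hw0
  have hQxy : Q x y = 0 := by
    by_contra hne
    have hQyx : Q y x = 0 := by
      rcases mul_eq_zero.mp q2 with h | h
      · exact absurd h hne
      · exact h
    have h1 := aux_nz hQ hxy.symm (Ne.symm hz0y) (Ne.symm hw0y) (Ne.symm hz0x)
      (Ne.symm hw0x) (fun hc => hw0z hc.symm) hQyx
    -- h1 : Q y z0 ≠ 0 ∧ Q w0 x ≠ 0
    have h2 := aux_nz hQ hxy.symm (Ne.symm hw0y) (Ne.symm hz0y) (Ne.symm hw0x)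
      (Ne.symm hz0x) hw0z hQyx
    -- h2 : Q y w0 ≠ 0 ∧ Q z0 x ≠ 0
    have h3 := hcase1 x y z0 hxy (Ne.symm hz0x) (Ne.symm hz0y)
    rw [hxy0, zero_mul, zero_mul] at h3
    exact (mul_ne_zero (mul_ne_zero hne h1.1) h2.2) h3.symm
  have hQyx : Q y x = 0 := by
    by_contra hne
    have h1 := aux_nz hQ hxy (Ne.symm hz0x) (Ne.symm hw0x) (Ne.symm hz0y)
      (Ne.symm hw0y) (fun hc => hw0z hc.symm) hQxy
    -- h1 : Q x z0 ≠ 0 ∧ Q w0 y ≠ 0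
    have h2 := aux_nz hQ hxy (Ne.symm hw0x) (Ne.symm hz0x) (Ne.symm hw0y)
      (Ne.symm hz0y) hw0z hQxy
    -- h2 : Q x w0 ≠ 0 ∧ Q z0 y ≠ 0
    have h3 := hcase1 y x z0 hxy.symm (Ne.symm hz0y) (Ne.symm hz0x)
    rw [hyx0, zero_mul, zero_mul] at h3
    exact (mul_ne_zero (mul_ne_zero hne h1.1) h2.2) h3.symm
  -- nonvanishing of Q on edges from/to {x,y}
  have Qnz : ∀ z : Λ, z ≠ x → z ≠ y →
      Q x z ≠ 0 ∧ Q z y ≠ 0 ∧ Q y z ≠ 0 ∧ Q z x ≠ 0 := by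
    intro z hzx hzy
    obtain ⟨w, hw⟩ := exists5 {x, y, z} (by
      exact le_trans (Finset.card_insert_le _ _)
        (le_trans (by exact Nat.succ_le_succ (Finset.card_insert_le _ _)) (by simp)))
    simp [Finset.mem_insert] at hw
    obtain ⟨hwx, hwy, hwz⟩ := hw
    have h1 := aux_nz hQ hxy hzx.symm (Ne.symm hwx) hzy.symm (Ne.symm hwy)
      (fun hc => hwz hc.symm) hQxy
    have h2 := aux_nz hQ hxy.symm hzy.symm (Ne.symm hwy) hzx.symm (Ne.symm hwx)
      (fun hc => hwz hc.symm) hQyx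
    have h4 := aux_nz hQ hxy (Ne.symm hwx) hzx.symm (Ne.symm hwy) hzy.symm
      hwz hQxy
    have h5 := aux_nz hQ hxy.symm (Ne.symm hwy) hzy.symm (Ne.symm hwx) hzx.symm
      hwz hQyx
    exact ⟨h1.1, h4.2, h2.1, h5.2⟩
  -- main ratio equality when K z w ≠ 0
  have ratio_of : ∀ z w : Λ, z ≠ x → z ≠ y → w ≠ x → w ≠ y → z ≠ w → K z w ≠ 0 →
      Q x z * Q z y / (K x z * K z y) = Q x w * Q w y / (K x w * K w y) := by
    intro z w hzx hzy hwx hwy hzw hKzw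
    obtain ⟨hKxz, hKzy, hKyz, hKzx⟩ := Knz z hzx hzy
    obtain ⟨hKxw, hKwy, hKyw, hKwx⟩ := Knz w hwx hwy
    obtain ⟨hQxz, hQzy, hQyz, hQzx⟩ := Qnz z hzx hzy
    obtain ⟨hQxw, hQwy, hQyw, hQwx⟩ := Qnz w hwx hwy
    have R1 := hcase1 x z w hzx.symm hwx.symm hzw
    -- K x z * K z w * K w x = Q x z * Q z w * Q w x
    have R2 := hcase1 z w y hzw hzy hwy
    -- K z w * K w y * K y z = Q z w * Q w y * Q y z
    have R3 := two z y
    have R4 := two x w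
    have hQzw : Q z w ≠ 0 := by
      intro hc
      rw [hc, mul_zero, zero_mul] at R1
      exact (mul_ne_zero (mul_ne_zero hKxz hKzw) hKwx) R1
    have m_ne : Q z w * Q w x * Q y z ≠ 0 :=
      mul_ne_zero (mul_ne_zero hQzw hQwx) hQyz
    rw [div_eq_div_iff (mul_ne_zero hKxz hKzy) (mul_ne_zero hKxw hKwy)]
    apply mul_right_cancel₀ m_ne
    linear_combination (-(Q z y * Q y z * (K x w * K w y))) * R1 -
      (K x z * K z w * K w x * (K x w * K w y)) * R3 +
      (Q w y * Q z w * Q y z * (K x z * K z y)) * R4 +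
      (K x z * K z y * K x w * K w x) * R2
  intro z w hzx hzy hwx hwy hzw
  obtain ⟨hKxz, hKzy, hKyz, hKzx⟩ := Knz z hzx hzy
  obtain ⟨hKxw, hKwy, hKyw, hKwx⟩ := Knz w hwx hwy
  refine ⟨⟨hKxz, hKzy, hKxw, hKwy⟩, ?_⟩
  by_cases h9 : K z w ≠ 0
  · exact ratio_of z w hzx hzy hwx hwy hzw h9
  by_cases h10 : K w z ≠ 0
  · exact (ratio_of w z hwx hwy hzx hzy hzw.symm h10).symm
  push_neg at h9 h10
  obtain ⟨u, hu⟩ := exists5 {x, y, z, w} (by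
    refine le_trans (Finset.card_insert_le _ _) ?_
    refine le_trans (Nat.succ_le_succ (Finset.card_insert_le _ _)) ?_
    refine le_trans (Nat.succ_le_succ (Nat.succ_le_succ (Finset.card_insert_le _ _))) ?_
    simp)
  simp [Finset.mem_insert] at hu
  obtain ⟨hux, huy, huz, huw⟩ := hu
  -- K z u ≠ 0 from class D with K z w = 0
  have hKzu : K z u ≠ 0 :=
    (aux_nz hK hzw (Ne.symm huz) hzx (Ne.symm huw) hwx hux h9).1
  have hKwu : K w u ≠ 0 :=
    (aux_nz hK hzw.symm (Ne.symm huw) hwx (Ne.symm huz) hzx hux h10).1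
  exact (ratio_of z u hzx hzy hux huy (Ne.symm huz) hKzu).trans
    (ratio_of w u hwx hwy hux huy (Ne.symm huw) hKwu).symm
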